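/- arXiv:1909.10494 — 3 statements merged into one kernel-verified Lean document; each statement's English description precedes it below -/
import Mathlib

section
/- Let G be a group with presentation ⟨X | R⟩ in which every generator is an involution and every relator has even length. Let x ∈ X and set I = X ∖ {x}. For every w ∈ G with w ≠ e, one has w ∈ G^I if and only if every reduced expression of w ends with the generator x (i.e. every expression of w as a product of l(w) generators has last factor x). -/
/-- The length of an element of a presented group whose generators are involutions:
the least `r` such that `w` is a product of `r` images of generators. -/
noncomputable def genLength {α : Type*} (R : Set (FreeGroup α)) (w : PresentedGroup R) : ℕ :=
  sInf {r : ℕ | ∃ L : List α, L.length = r ∧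
    (L.map (PresentedGroup.of : α → PresentedGroup R)).prod = w}

section aux

variable {α : Type*} [DecidableEq α] {R : Set (FreeGroup α)}

lemma lift_parity (g : FreeGroup α) :
    FreeGroup.lift (fun _ : α => Multiplicative.ofAdd (1 : ZMod 2)) g
      = Multiplicative.ofAdd ((g.toWord.length : ZMod 2)) := by
  conv_lhs => rw [← FreeGroup.mk_toWord (x := g)]
  rw [FreeGroup.lift_mk]
  induction g.toWord with
  | nil => simp
  | cons a L ih =>
      simp only [List.map_cons, List.prod_cons, List.length_cons, ih]
      have h1 : (cond a.2 (Multiplicative.ofAdd (1 : ZMod 2))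
          (Multiplicative.ofAdd (1 : ZMod 2))⁻¹) = Multiplicative.ofAdd (1 : ZMod 2) := by
        cases a.2
        · simp; decide
        · simp
      rw [h1, ← ofAdd_add]
      congr 1
      push_cast
      ring

lemma of_inv (hinv : ∀ x : α, (PresentedGroup.of x : PresentedGroup R) ^ 2 = 1) (y : α) :
    (PresentedGroup.of y : PresentedGroup R)⁻¹ = PresentedGroup.of y := by
  have := hinv y
  rw [sq] at this
  exact inv_eq_of_mul_eq_one_left this

lemma prod_inv (hinv : ∀ x : α, (PresentedGroup.of x : PresentedGroup R) ^ 2 = 1) (L : List α) :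
    ((L.map (PresentedGroup.of : α → PresentedGroup R)).prod)⁻¹
      = ((L.reverse.map (PresentedGroup.of : α → PresentedGroup R)).prod) := by
  induction L with
  | nil => simp
  | cons a L ih =>
      simp only [List.map_cons, List.prod_cons, mul_inv_rev, ih, List.reverse_cons,
        List.map_append, List.prod_append, List.map_cons, List.map_nil, List.prod_cons,
        List.prod_nil, of_inv hinv, mul_one]

lemma exists_expr (hinv : ∀ x : α, (PresentedGroup.of x : PresentedGroup R) ^ 2 = 1)
    (w : PresentedGroup R) :
    ∃ L : List α, (L.map (PresentedGroup.of : α → PresentedGroup R)).prod = w := by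
  induction w using PresentedGroup.induction_on with
  | H z =>
    induction z using FreeGroup.induction_on with
    | C1 => exact ⟨[], by simp⟩
    | of x => exact ⟨[x], by simp; rfl⟩
    | inv_of x _ =>
        refine ⟨[x], ?_⟩
        rw [map_inv]
        have : (PresentedGroup.mk R) (FreeGroup.of x) = (PresentedGroup.of x : PresentedGroup R) := rfl
        rw [this, of_inv hinv]
        simp
    | mul u v hu hv =>
        obtain ⟨Lu, hLu⟩ := hu
        obtain ⟨Lv, hLv⟩ := hv
        exact ⟨Lu ++ Lv, by simp [List.prod_append, hLu, hLv]⟩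

lemma genLength_mem (hinv : ∀ x : α, (PresentedGroup.of x : PresentedGroup R) ^ 2 = 1)
    (w : PresentedGroup R) :
    ∃ L : List α, L.length = genLength R w ∧
      (L.map (PresentedGroup.of : α → PresentedGroup R)).prod = w := by
  obtain ⟨L, hL⟩ := exists_expr hinv w
  have : genLength R w ∈ {r : ℕ | ∃ L : List α, L.length = r ∧
      (L.map (PresentedGroup.of : α → PresentedGroup R)).prod = w} :=
    Nat.sInf_mem ⟨L.length, L, rfl, hL⟩
  exact this

lemma genLength_le {w : PresentedGroup R} {L : List α}
    (h : (L.map (PresentedGroup.of : α → PresentedGroup R)).prod = w) :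
    genLength R w ≤ L.length :=
  Nat.sInf_le ⟨L, rfl, h⟩

/-- The parity homomorphism. -/
noncomputable def parityHom (heven : ∀ r ∈ R, Even (FreeGroup.toWord r).length) :
    PresentedGroup R →* Multiplicative (ZMod 2) :=
  PresentedGroup.toGroup (f := fun _ : α => Multiplicative.ofAdd (1 : ZMod 2)) (by
    intro r hr
    rw [lift_parity]
    have : ((FreeGroup.toWord r).length : ZMod 2) = 0 := by
      obtain ⟨k, hk⟩ := heven r hr
      rw [hk]; push_cast
      rw [← two_mul, show (2 : ZMod 2) = 0 from rfl, zero_mul]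
    rw [this]; rfl)

lemma parityHom_prod (heven : ∀ r ∈ R, Even (FreeGroup.toWord r).length) (L : List α) :
    parityHom heven ((L.map (PresentedGroup.of : α → PresentedGroup R)).prod)
      = Multiplicative.ofAdd ((L.length : ZMod 2)) := by
  induction L with
  | nil => simp
  | cons a L ih =>
      simp only [List.map_cons, List.prod_cons, map_mul, ih, List.length_cons]
      rw [show parityHom heven (PresentedGroup.of a) = Multiplicative.ofAdd (1 : ZMod 2) from
        PresentedGroup.toGroup.of _, ← ofAdd_add]
      congr 1
      push_cast
      ring

lemma parity_ne (hinv : ∀ x : α, (PresentedGroup.of x : PresentedGroup R) ^ 2 = 1)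
    (heven : ∀ r ∈ R, Even (FreeGroup.toWord r).length)
    (w : PresentedGroup R) (y : α) :
    genLength R (w * PresentedGroup.of y) ≠ genLength R w := by
  obtain ⟨L, hLlen, hLprod⟩ := genLength_mem hinv w
  obtain ⟨M, hMlen, hMprod⟩ := genLength_mem hinv (w * PresentedGroup.of y)
  intro h
  have h1 := parityHom_prod heven L
  have h2 := parityHom_prod heven M
  rw [hLprod] at h1
  rw [hMprod, map_mul, h1,
    show parityHom heven (PresentedGroup.of y) = Multiplicative.ofAdd (1 : ZMod 2) from
      PresentedGroup.toGroup.of _, ← ofAdd_add] at h2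
  have h3 : ((M.length : ZMod 2)) = (L.length : ZMod 2) + 1 :=
    (Multiplicative.ofAdd.injective h2).symm
  rw [hLlen, hMlen, h] at h3
  have : (1 : ZMod 2) = 0 := by
    have := sub_eq_zero_of_eq h3
    simpa using this.symm
  exact one_ne_zero this

end aux

theorem stmt_4 {α : Type*} [DecidableEq α] (R : Set (FreeGroup α))
    (hinv : ∀ x : α, (PresentedGroup.of x : PresentedGroup R) ^ 2 = 1)
    (heven : ∀ r ∈ R, Even (FreeGroup.toWord r).length)
    (x : α) (w : PresentedGroup R) (hw : w ≠ 1) :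
    (∀ y ∈ (Set.univ \ {x} : Set α),
        genLength R w < genLength R (w * PresentedGroup.of y)) ↔
      ∀ L : List α, L.length = genLength R w →
        (L.map (PresentedGroup.of : α → PresentedGroup R)).prod = w →
        L.getLast? = some x := by
  constructor
  · intro h L hLlen hLprod
    have hLne : L ≠ [] := by
      rintro rfl
      simp at hLprod
      exact hw hLprod.symm
    set y := L.getLast hLne with hy
    have hL : L = L.dropLast ++ [y] := (List.dropLast_append_getLast hLne).symm
    -- w * of y has a shorter expression
    have hshort : ((L.dropLast.map (PresentedGroup.of : α → PresentedGroup R)).prod)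
        = w * PresentedGroup.of y := by
      rw [← hLprod]
      conv_rhs => rw [hL]
      simp only [List.map_append, List.prod_append, List.map_cons, List.map_nil,
        List.prod_cons, List.prod_nil, mul_one]
      rw [mul_assoc, ← sq, hinv y, mul_one]
    have hlt : genLength R (w * PresentedGroup.of y) < genLength R w := by
      have h1 : genLength R (w * PresentedGroup.of y) ≤ L.dropLast.length :=
        genLength_le hshort
      have h2 : L.dropLast.length < L.length := by
        rw [List.length_dropLast]
        exact Nat.sub_lt (List.length_pos_iff.mpr hLne) one_pos
      omega
    have hyx : y = x := by
      by_contra hne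
      have := h y ⟨Set.mem_univ y, hne⟩
      omega
    rw [List.getLast?_eq_getLast hLne]
    exact congrArg some (hy.symm.trans hyx)
  · intro h y hy
    simp only [Set.mem_diff, Set.mem_univ, Set.mem_singleton_iff, true_and] at hy
    by_contra hle
    push_neg at hle
    have hne := parity_ne hinv heven w y
    have hlt : genLength R (w * PresentedGroup.of y) < genLength R w := by omega
    obtain ⟨M, hMlen, hMprod⟩ := genLength_mem hinv (w * PresentedGroup.of y)
    have hMprod' : ((M ++ [y]).map (PresentedGroup.of : α → PresentedGroup R)).prod = w := by
      simp only [List.map_append, List.prod_append, List.map_cons, List.map_nil,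
        List.prod_cons, List.prod_nil, mul_one, hMprod]
      rw [mul_assoc, ← sq, hinv y, mul_one]
    have hlen2 : genLength R w ≤ M.length + 1 := by
      have := genLength_le hMprod'
      simpa using this
    have hlen3 : (M ++ [y]).length = genLength R w := by
      simp only [List.length_append, List.length_singleton]
      omega
    have := h (M ++ [y]) hlen3 hMprod'
    rw [List.getLast?_concat] at this
    exact hy (Option.some.injEq _ _ ▸ this.symm ▸ rfl)
end

section
/- Let G be the cluster group with presentation on generators t₁, t₂, t₃ subject to the relations t₁² = t₂² = t₃² = e, the braid relations, and the cycle relations, and let I = {t₁, t₂}. Then G_I equals the six-element set {e, t₁, t₂, t₁t₂, t₂t₁, t₁t₂t₁} and G^I equals the six-element set {e, t₃, t₁t₃, t₂t₃, t₁t₂t₃, t₂t₁t₃}. -/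
/-- The relators of the cluster group presentation associated to the quiver of
mutation-Dynkin type A₃: the generators `t₁, t₂, t₃` (indexed by `0, 1, 2 : Fin 3`) are
involutions, they satisfy the braid relations and the cycle relations. -/
def clusterRels : Set (FreeGroup (Fin 3)) :=
  { FreeGroup.of 0 ^ 2, FreeGroup.of 1 ^ 2, FreeGroup.of 2 ^ 2,
    (FreeGroup.of 0 * FreeGroup.of 1 * FreeGroup.of 0) *
      (FreeGroup.of 1 * FreeGroup.of 0 * FreeGroup.of 1)⁻¹,
    (FreeGroup.of 0 * FreeGroup.of 2 * FreeGroup.of 0) *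
      (FreeGroup.of 2 * FreeGroup.of 0 * FreeGroup.of 2)⁻¹,
    (FreeGroup.of 1 * FreeGroup.of 2 * FreeGroup.of 1) *
      (FreeGroup.of 2 * FreeGroup.of 1 * FreeGroup.of 2)⁻¹,
    (FreeGroup.of 0 * FreeGroup.of 1 * FreeGroup.of 2 * FreeGroup.of 0) *
      (FreeGroup.of 1 * FreeGroup.of 2 * FreeGroup.of 0 * FreeGroup.of 1)⁻¹,
    (FreeGroup.of 1 * FreeGroup.of 2 * FreeGroup.of 0 * FreeGroup.of 1) *
      (FreeGroup.of 2 * FreeGroup.of 0 * FreeGroup.of 1 * FreeGroup.of 2)⁻¹ }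

/-- The cluster group of mutation-Dynkin type A₃. -/
abbrev ClusterGroupA3 : Type := PresentedGroup clusterRels

/-- `t i` is the image in the cluster group of the generator `tᵢ₊₁`. -/
def t (i : Fin 3) : ClusterGroupA3 := PresentedGroup.of i

/-- The length of an element of the cluster group: the least `r` such that `w` is a
product of `r` generators. -/
noncomputable def len (w : ClusterGroupA3) : ℕ :=
  sInf {r : ℕ | ∃ L : List (Fin 3), L.length = r ∧ (L.map t).prod = w}

-- permutation representation
def f3 : Fin 3 → Equiv.Perm (Fin 4) := ![Equiv.swap 0 1, Equiv.swap 0 2, Equiv.swap 0 3]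

lemma f3_rels : ∀ r ∈ clusterRels, FreeGroup.lift f3 r = 1 := by
  intro r hr
  simp only [clusterRels, Set.mem_insert_iff, Set.mem_singleton_iff] at hr
  rcases hr with rfl|rfl|rfl|rfl|rfl|rfl|rfl|rfl <;>
    simp only [map_mul, map_pow, map_inv, FreeGroup.lift_apply_of] <;> decide

noncomputable def φ3 : ClusterGroupA3 →* Equiv.Perm (Fin 4) :=
  PresentedGroup.toGroup f3_rels

lemma φ3_t (i : Fin 3) : φ3 (t i) = f3 i := PresentedGroup.toGroup.of f3_rels

-- relators hold in G
lemma relG {r : FreeGroup (Fin 3)} (h : r ∈ clusterRels) :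
    (QuotientGroup.mk r : ClusterGroupA3) = 1 :=
  (QuotientGroup.eq_one_iff r).mpr (Subgroup.subset_normalClosure h)

lemma mk_of (i : Fin 3) : (QuotientGroup.mk (FreeGroup.of i) : ClusterGroupA3) = t i := rfl

def eG (L : List (Fin 3)) : ClusterGroupA3 := (L.map t).prod

lemma eG_append (A B : List (Fin 3)) : eG (A ++ B) = eG A * eG B := by
  simp [eG, List.prod_append]

lemma stepE {X Y : List (Fin 3)} (h : eG X = eG Y) (A B : List (Fin 3)) :
    eG (A ++ (X ++ B)) = eG (A ++ (Y ++ B)) := by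
  simp only [eG_append, h]

-- base relations as eG equations
lemma tt (i : Fin 3) : t i * t i = 1 := by
  fin_cases i
  · have := relG (show FreeGroup.of 0 ^ 2 ∈ clusterRels by left; rfl)
    rw [pow_two] at this; simp [t, PresentedGroup.of] at this ⊢; exact this
  · have := relG (show FreeGroup.of 1 ^ 2 ∈ clusterRels by right; left; rfl)
    rw [pow_two] at this; simp [t, PresentedGroup.of] at this ⊢; exact this
  · have := relG (show FreeGroup.of 2 ^ 2 ∈ clusterRels by right; right; left; rfl)
    rw [pow_two] at this; simp [t, PresentedGroup.of] at this ⊢; exact this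

lemma Q0 : eG [0, 0] = eG [] := by simpa [eG] using tt 0
lemma Q1 : eG [1, 1] = eG [] := by simpa [eG] using tt 1
lemma Q2 : eG [2, 2] = eG [] := by simpa [eG] using tt 2

lemma B01 : eG [0, 1, 0] = eG [1, 0, 1] := by
  have := relG (show _ ∈ clusterRels from by right; right; right; left; rfl)
  simp only [QuotientGroup.mk_mul, QuotientGroup.mk_inv] at this
  rw [mul_inv_eq_one] at this
  simp [eG, t, PresentedGroup.of, mul_assoc] at this ⊢; exact this

lemma B02 : eG [0, 2, 0] = eG [2, 0, 2] := by
  have := relG (show _ ∈ clusterRels from by right; right; right; right; left; rfl)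
  simp only [QuotientGroup.mk_mul, QuotientGroup.mk_inv] at this
  rw [mul_inv_eq_one] at this
  simp [eG, t, PresentedGroup.of, mul_assoc] at this ⊢; exact this

lemma B12 : eG [1, 2, 1] = eG [2, 1, 2] := by
  have := relG (show _ ∈ clusterRels from by right; right; right; right; right; left; rfl)
  simp only [QuotientGroup.mk_mul, QuotientGroup.mk_inv] at this
  rw [mul_inv_eq_one] at this
  simp [eG, t, PresentedGroup.of, mul_assoc] at this ⊢; exact this

lemma C1 : eG [0, 1, 2, 0] = eG [1, 2, 0, 1] := by
  have := relG (show _ ∈ clusterRels from by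
    right; right; right; right; right; right; left; rfl)
  simp only [QuotientGroup.mk_mul, QuotientGroup.mk_inv] at this
  rw [mul_inv_eq_one] at this
  simp [eG, t, PresentedGroup.of, mul_assoc] at this ⊢; exact this

lemma C2 : eG [1, 2, 0, 1] = eG [2, 0, 1, 2] := by
  have := relG (show _ ∈ clusterRels from by
    right; right; right; right; right; right; right; rfl)
  simp only [QuotientGroup.mk_mul, QuotientGroup.mk_inv] at this
  rw [mul_inv_eq_one] at this
  simp [eG, t, PresentedGroup.of, mul_assoc] at this ⊢; exact this

lemma t_inv (i : Fin 3) : (t i)⁻¹ = t i :=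
  inv_eq_of_mul_eq_one_right (tt i)

lemma eG_reverse (L : List (Fin 3)) : (eG L)⁻¹ = eG L.reverse := by
  induction L with
  | nil => simp [eG]
  | cons a L ih =>
      simp only [eG, List.map_cons, List.prod_cons, List.reverse_cons, mul_inv_rev] at *
      rw [ih]
      simp [eG, List.prod_append, t_inv, eG_append]

lemma exists_word (g : ClusterGroupA3) : ∃ L : List (Fin 3), eG L = g := by
  have htop : g ∈ Subgroup.closure (Set.range (PresentedGroup.of : Fin 3 → ClusterGroupA3)) := by
    rw [PresentedGroup.closure_range_of]; trivial
  induction htop using Subgroup.closure_induction with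
  | mem x hx => obtain ⟨i, rfl⟩ := hx; exact ⟨[i], by simp [eG, t]⟩
  | one => exact ⟨[], rfl⟩
  | mul x y _ _ hx hy =>
      obtain ⟨L1, rfl⟩ := hx; obtain ⟨L2, rfl⟩ := hy
      exact ⟨L1 ++ L2, eG_append L1 L2⟩
  | inv x _ hx =>
      obtain ⟨L, rfl⟩ := hx
      exact ⟨L.reverse, (eG_reverse L).symm⟩

-- balls in the permutation group
def ball : ℕ → Finset (Equiv.Perm (Fin 4))
  | 0 => {1}
  | n + 1 => ball n ∪ ((ball n).image (· * f3 0) ∪ ((ball n).image (· * f3 1) ∪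
      (ball n).image (· * f3 2)))

lemma ball_mono {m n : ℕ} (h : m ≤ n) : ball m ⊆ ball n := by
  induction n with
  | zero => simpa [Nat.le_zero.mp h]
  | succ n ih =>
      rcases Nat.lt_or_ge m (n+1) with h'|h'
      · exact fun x hx => by
          have := ih (Nat.lt_succ_iff.mp h') hx
          simp [ball]; tauto
      · have hmn : m = n + 1 := le_antisymm h h'
        subst hmn; exact fun x hx => hx

lemma prod_mem_ball (L : List (Fin 3)) : (L.map f3).prod ∈ ball L.length := by
  induction L using List.reverseRecOn with
  | nil => simp [ball]
  | append_singleton L i ih =>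
      have hlen : (L ++ [i]).length = L.length + 1 := by simp
      have hprod : ((L ++ [i]).map f3).prod = (L.map f3).prod * f3 i := by simp
      rw [hlen, hprod]
      simp only [ball, Finset.mem_union, Finset.mem_image]
      fin_cases i
      · exact Or.inr (Or.inl ⟨_, ih, rfl⟩)
      · exact Or.inr (Or.inr (Or.inl ⟨_, ih, rfl⟩))
      · exact Or.inr (Or.inr (Or.inr ⟨_, ih, rfl⟩))

lemma φ3_eG (L : List (Fin 3)) : φ3 (eG L) = (L.map f3).prod := by
  induction L with
  | nil => simp [eG]
  | cons a L ih => simp [eG, List.prod_cons, map_mul, φ3_t] at *; simp [ih, φ3_t]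

lemma len_le (M : List (Fin 3)) : len (eG M) ≤ M.length :=
  Nat.sInf_le ⟨M, rfl, rfl⟩

lemma len_lb {w : ClusterGroupA3} {k : ℕ} (h : φ3 w ∉ ball k) : k < len w := by
  obtain ⟨L, hL⟩ := exists_word w
  have hmem : len w ∈ {r : ℕ | ∃ L : List (Fin 3), L.length = r ∧ (L.map t).prod = w} :=
    Nat.sInf_mem ⟨L.length, L, rfl, hL⟩
  obtain ⟨M, hM, hMw⟩ := hmem
  by_contra hk
  push_neg at hk
  apply h
  have : φ3 w = (M.map f3).prod := by rw [← hMw]; exact φ3_eG M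
  rw [this]
  exact ball_mono (hM ▸ hk) (prod_mem_ball M)

def NF24L : List (List (Fin 3)) := [[], [0], [1], [2], [0, 1], [0, 2], [1, 0], [1, 2], [2, 0], [2, 1], [0, 1, 0], [0, 1, 2], [0, 2, 0], [0, 2, 1], [1, 0, 2], [1, 2, 0], [1, 2, 1], [2, 0, 1], [2, 1, 0], [0, 1, 0, 2], [0, 1, 2, 0], [0, 1, 2, 1], [0, 2, 0, 1], [0, 2, 1, 0]]

lemma step24 : ∀ M ∈ NF24L, ∀ i : Fin 3, ∃ M' ∈ NF24L, eG (M ++ [i]) = eG M' := by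
  intro M hM i
  fin_cases hM <;> fin_cases i
  · exact ⟨[0], by decide, rfl⟩
  · exact ⟨[1], by decide, rfl⟩
  · exact ⟨[2], by decide, rfl⟩
  · exact ⟨[], by decide, stepE Q0 [] []⟩
  · exact ⟨[0, 1], by decide, rfl⟩
  · exact ⟨[0, 2], by decide, rfl⟩
  · exact ⟨[1, 0], by decide, rfl⟩
  · exact ⟨[], by decide, stepE Q1 [] []⟩
  · exact ⟨[1, 2], by decide, rfl⟩
  · exact ⟨[2, 0], by decide, rfl⟩
  · exact ⟨[2, 1], by decide, rfl⟩
  · exact ⟨[], by decide, stepE Q2 [] []⟩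
  · exact ⟨[0, 1, 0], by decide, rfl⟩
  · exact ⟨[0], by decide, stepE Q1 [0] []⟩
  · exact ⟨[0, 1, 2], by decide, rfl⟩
  · exact ⟨[0, 2, 0], by decide, rfl⟩
  · exact ⟨[0, 2, 1], by decide, rfl⟩
  · exact ⟨[0], by decide, stepE Q2 [0] []⟩
  · exact ⟨[1], by decide, stepE Q0 [1] []⟩
  · exact ⟨[0, 1, 0], by decide, stepE B01.symm [] []⟩
  · exact ⟨[1, 0, 2], by decide, rfl⟩
  · exact ⟨[1, 2, 0], by decide, rfl⟩
  · exact ⟨[1, 2, 1], by decide, rfl⟩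
  · exact ⟨[1], by decide, stepE Q2 [1] []⟩
  · exact ⟨[2], by decide, stepE Q0 [2] []⟩
  · exact ⟨[2, 0, 1], by decide, rfl⟩
  · exact ⟨[0, 2, 0], by decide, stepE B02.symm [] []⟩
  · exact ⟨[2, 1, 0], by decide, rfl⟩
  · exact ⟨[2], by decide, stepE Q1 [2] []⟩
  · exact ⟨[1, 2, 1], by decide, stepE B12.symm [] []⟩
  · exact ⟨[0, 1], by decide, stepE Q0 [0, 1] []⟩
  · exact ⟨[1, 0], by decide, (stepE B01 [] [1]).trans (stepE Q1 [1, 0] [])⟩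
  · exact ⟨[0, 1, 0, 2], by decide, rfl⟩
  · exact ⟨[0, 1, 2, 0], by decide, rfl⟩
  · exact ⟨[0, 1, 2, 1], by decide, rfl⟩
  · exact ⟨[0, 1], by decide, stepE Q2 [0, 1] []⟩
  · exact ⟨[0, 2], by decide, stepE Q0 [0, 2] []⟩
  · exact ⟨[0, 2, 0, 1], by decide, rfl⟩
  · exact ⟨[2, 0], by decide, (stepE B02 [] [2]).trans (stepE Q2 [2, 0] [])⟩
  · exact ⟨[0, 2, 1, 0], by decide, rfl⟩
  · exact ⟨[0, 2], by decide, stepE Q1 [0, 2] []⟩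
  · exact ⟨[0, 1, 2, 1], by decide, stepE B12.symm [0] []⟩
  · exact ⟨[0, 2, 0, 1], by decide, (stepE Q0.symm [] [1, 0, 2, 0]).trans ((stepE B01 [0] [2, 0]).trans ((stepE C1 [0, 1] []).trans (stepE Q1 [0] [2, 0, 1])))⟩
  · exact ⟨[0, 2, 1, 0], by decide, (stepE Q0.symm [] [1, 0, 2, 1]).trans ((stepE Q0.symm [0, 0, 1, 0, 2] [1]).trans ((stepE B01 [0] [2, 0, 0, 1]).trans ((stepE C1 [0, 1] [0, 1]).trans ((stepE Q1 [0] [2, 0, 1, 0, 1]).trans ((stepE B01 [0, 2] [1]).trans (stepE Q1 [0, 2, 1, 0] []))))))⟩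
  · exact ⟨[1, 0], by decide, stepE Q2 [1, 0] []⟩
  · exact ⟨[1, 2], by decide, stepE Q0 [1, 2] []⟩
  · exact ⟨[0, 1, 2, 0], by decide, stepE C1.symm [] []⟩
  · exact ⟨[0, 2, 0, 1], by decide, (stepE Q0.symm [] [1, 2, 0, 2]).trans ((stepE C1 [0] [2]).trans ((stepE C2 [0] [2]).trans (stepE Q2 [0, 2, 0, 1] [])))⟩
  · exact ⟨[0, 1, 2, 1], by decide, (stepE Q0.symm [1, 2] [1, 0]).trans ((stepE B01 [1, 2, 0] []).trans ((stepE C1.symm [] [0, 1]).trans (stepE Q0 [0, 1, 2] [1])))⟩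
  · exact ⟨[1, 2], by decide, stepE Q1 [1, 2] []⟩
  · exact ⟨[2, 1], by decide, (stepE B12 [] [2]).trans (stepE Q2 [2, 1] [])⟩
  · exact ⟨[0, 1, 0, 2], by decide, (stepE Q1.symm [] [2, 0, 1, 0]).trans ((stepE C1.symm [1] [0]).trans ((stepE Q0 [1, 0, 1, 2] []).trans (stepE B01.symm [] [2])))⟩
  · exact ⟨[2, 0], by decide, stepE Q1 [2, 0] []⟩
  · exact ⟨[0, 1, 2, 0], by decide, (stepE C2.symm [] []).trans (stepE C1.symm [] [])⟩
  · exact ⟨[2, 1], by decide, stepE Q0 [2, 1] []⟩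
  · exact ⟨[0, 1, 0, 2], by decide, (stepE Q1.symm [] [2, 1, 0, 1]).trans ((stepE B01.symm [1, 1, 2] []).trans ((stepE C1.symm [1] [0]).trans ((stepE Q0 [1, 0, 1, 2] []).trans (stepE B01.symm [] [2]))))⟩
  · exact ⟨[0, 2, 1, 0], by decide, (stepE Q0.symm [2] [1, 0, 2]).trans ((stepE Q0.symm [2, 0, 0, 1, 0, 2] []).trans ((stepE B01 [2, 0] [2, 0, 0]).trans ((stepE C1 [2, 0, 1] [0]).trans ((stepE Q1 [2, 0] [2, 0, 1, 0]).trans ((stepE B02 [2] [1, 0]).trans (stepE Q2 [] [0, 2, 1, 0]))))))⟩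
  · exact ⟨[2, 0, 1], by decide, (stepE B01 [] [2, 0]).trans ((stepE C1 [1] []).trans (stepE Q1 [] [2, 0, 1]))⟩
  · exact ⟨[2, 1, 0], by decide, (stepE Q0.symm [0, 1, 0, 2] [1]).trans ((stepE B01 [] [2, 0, 0, 1]).trans ((stepE C1 [1] [0, 1]).trans ((stepE Q1 [] [2, 0, 1, 0, 1]).trans ((stepE B01 [2] [1]).trans (stepE Q1 [2, 1, 0] [])))))⟩
  · exact ⟨[0, 1, 0], by decide, stepE Q2 [0, 1, 0] []⟩
  · exact ⟨[0, 1, 2], by decide, stepE Q0 [0, 1, 2] []⟩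
  · exact ⟨[1, 2, 0], by decide, (stepE C1 [] [1]).trans (stepE Q1 [1, 2, 0] [])⟩
  · exact ⟨[2, 0, 1], by decide, (stepE C1 [] [2]).trans ((stepE C2 [] [2]).trans (stepE Q2 [2, 0, 1] []))⟩
  · exact ⟨[1, 2, 1], by decide, (stepE Q0.symm [0, 1, 2] [1, 0]).trans ((stepE B01 [0, 1, 2, 0] []).trans ((stepE C1 [] [1, 0, 1]).trans ((stepE Q1 [1, 2, 0] [0, 1]).trans (stepE Q0 [1, 2] [1]))))⟩
  · exact ⟨[0, 1, 2], by decide, stepE Q1 [0, 1, 2] []⟩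
  · exact ⟨[0, 2, 1], by decide, (stepE B12 [0] [2]).trans (stepE Q2 [0, 2, 1] [])⟩
  · exact ⟨[1, 0, 2], by decide, (stepE Q1.symm [0] [2, 0, 1, 0]).trans ((stepE C1.symm [0, 1] [0]).trans ((stepE Q0 [0, 1, 0, 1, 2] []).trans ((stepE B01 [] [1, 2]).trans (stepE Q1 [1, 0] [2]))))⟩
  · exact ⟨[0, 2, 0], by decide, stepE Q1 [0, 2, 0] []⟩
  · exact ⟨[1, 2, 0], by decide, (stepE C2.symm [0] []).trans ((stepE C1 [] [1]).trans (stepE Q1 [1, 2, 0] []))⟩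
  · exact ⟨[0, 2, 1], by decide, stepE Q0 [0, 2, 1] []⟩
  · exact ⟨[1, 0, 2], by decide, (stepE Q1.symm [0] [2, 1, 0, 1]).trans ((stepE B01.symm [0, 1, 1, 2] []).trans ((stepE C1.symm [0, 1] [0]).trans ((stepE Q0 [0, 1, 0, 1, 2] []).trans ((stepE B01 [] [1, 2]).trans (stepE Q1 [1, 0] [2])))))⟩
  · exact ⟨[2, 1, 0], by decide, (stepE Q0.symm [0, 2] [1, 0, 2]).trans ((stepE Q0.symm [0, 2, 0, 0, 1, 0, 2] []).trans ((stepE B01 [0, 2, 0] [2, 0, 0]).trans ((stepE B02 [] [1, 0, 1, 2, 0, 0]).trans ((stepE C1 [2, 0, 2, 1] [0]).trans ((stepE Q1 [2, 0, 2] [2, 0, 1, 0]).trans ((stepE Q2 [2, 0] [0, 1, 0]).trans (stepE Q0 [2] [1, 0])))))))⟩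

lemma E_nil : eG [] = (1 : ClusterGroupA3) := by simp [eG, mul_assoc]
lemma E_0 : eG [0] = t 0 := by simp [eG, mul_assoc]
lemma E_01 : eG [0, 1] = t 0 * t 1 := by simp [eG, mul_assoc]
lemma E_010 : eG [0, 1, 0] = t 0 * t 1 * t 0 := by simp [eG, mul_assoc]
lemma E_012 : eG [0, 1, 2] = t 0 * t 1 * t 2 := by simp [eG, mul_assoc]
lemma E_02 : eG [0, 2] = t 0 * t 2 := by simp [eG, mul_assoc]
lemma E_1 : eG [1] = t 1 := by simp [eG, mul_assoc]
lemma E_10 : eG [1, 0] = t 1 * t 0 := by simp [eG, mul_assoc]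
lemma E_102 : eG [1, 0, 2] = t 1 * t 0 * t 2 := by simp [eG, mul_assoc]
lemma E_12 : eG [1, 2] = t 1 * t 2 := by simp [eG, mul_assoc]
lemma E_2 : eG [2] = t 2 := by simp [eG, mul_assoc]

lemma eG_concat (M : List (Fin 3)) (i : Fin 3) : eG (M ++ [i]) = eG M * t i := by
  rw [eG_append]; simp [eG]

lemma len_nf : ∀ M ∈ NF24L, len (eG M) = M.length := by
  intro M hM
  fin_cases hM
  · exact Nat.sInf_eq_zero.mpr (Or.inl ⟨[], rfl, rfl⟩)
  · show len (eG [0]) = 1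
    have h1 : len (eG [0]) ≤ 1 := len_le [0]
    have h2 : 0 < len (eG [0]) := len_lb (by rw [φ3_eG]; decide)
    omega
  · show len (eG [1]) = 1
    have h1 : len (eG [1]) ≤ 1 := len_le [1]
    have h2 : 0 < len (eG [1]) := len_lb (by rw [φ3_eG]; decide)
    omega
  · show len (eG [2]) = 1
    have h1 : len (eG [2]) ≤ 1 := len_le [2]
    have h2 : 0 < len (eG [2]) := len_lb (by rw [φ3_eG]; decide)
    omega
  · show len (eG [0, 1]) = 2
    have h1 : len (eG [0, 1]) ≤ 2 := len_le [0, 1]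
    have h2 : 1 < len (eG [0, 1]) := len_lb (by rw [φ3_eG]; decide)
    omega
  · show len (eG [0, 2]) = 2
    have h1 : len (eG [0, 2]) ≤ 2 := len_le [0, 2]
    have h2 : 1 < len (eG [0, 2]) := len_lb (by rw [φ3_eG]; decide)
    omega
  · show len (eG [1, 0]) = 2
    have h1 : len (eG [1, 0]) ≤ 2 := len_le [1, 0]
    have h2 : 1 < len (eG [1, 0]) := len_lb (by rw [φ3_eG]; decide)
    omega
  · show len (eG [1, 2]) = 2
    have h1 : len (eG [1, 2]) ≤ 2 := len_le [1, 2]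
    have h2 : 1 < len (eG [1, 2]) := len_lb (by rw [φ3_eG]; decide)
    omega
  · show len (eG [2, 0]) = 2
    have h1 : len (eG [2, 0]) ≤ 2 := len_le [2, 0]
    have h2 : 1 < len (eG [2, 0]) := len_lb (by rw [φ3_eG]; decide)
    omega
  · show len (eG [2, 1]) = 2
    have h1 : len (eG [2, 1]) ≤ 2 := len_le [2, 1]
    have h2 : 1 < len (eG [2, 1]) := len_lb (by rw [φ3_eG]; decide)
    omega
  · show len (eG [0, 1, 0]) = 3
    have h1 : len (eG [0, 1, 0]) ≤ 3 := len_le [0, 1, 0]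
    have h2 : 2 < len (eG [0, 1, 0]) := len_lb (by rw [φ3_eG]; decide)
    omega
  · show len (eG [0, 1, 2]) = 3
    have h1 : len (eG [0, 1, 2]) ≤ 3 := len_le [0, 1, 2]
    have h2 : 2 < len (eG [0, 1, 2]) := len_lb (by rw [φ3_eG]; decide)
    omega
  · show len (eG [0, 2, 0]) = 3
    have h1 : len (eG [0, 2, 0]) ≤ 3 := len_le [0, 2, 0]
    have h2 : 2 < len (eG [0, 2, 0]) := len_lb (by rw [φ3_eG]; decide)
    omega
  · show len (eG [0, 2, 1]) = 3
    have h1 : len (eG [0, 2, 1]) ≤ 3 := len_le [0, 2, 1]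
    have h2 : 2 < len (eG [0, 2, 1]) := len_lb (by rw [φ3_eG]; decide)
    omega
  · show len (eG [1, 0, 2]) = 3
    have h1 : len (eG [1, 0, 2]) ≤ 3 := len_le [1, 0, 2]
    have h2 : 2 < len (eG [1, 0, 2]) := len_lb (by rw [φ3_eG]; decide)
    omega
  · show len (eG [1, 2, 0]) = 3
    have h1 : len (eG [1, 2, 0]) ≤ 3 := len_le [1, 2, 0]
    have h2 : 2 < len (eG [1, 2, 0]) := len_lb (by rw [φ3_eG]; decide)
    omega
  · show len (eG [1, 2, 1]) = 3
    have h1 : len (eG [1, 2, 1]) ≤ 3 := len_le [1, 2, 1]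
    have h2 : 2 < len (eG [1, 2, 1]) := len_lb (by rw [φ3_eG]; decide)
    omega
  · show len (eG [2, 0, 1]) = 3
    have h1 : len (eG [2, 0, 1]) ≤ 3 := len_le [2, 0, 1]
    have h2 : 2 < len (eG [2, 0, 1]) := len_lb (by rw [φ3_eG]; decide)
    omega
  · show len (eG [2, 1, 0]) = 3
    have h1 : len (eG [2, 1, 0]) ≤ 3 := len_le [2, 1, 0]
    have h2 : 2 < len (eG [2, 1, 0]) := len_lb (by rw [φ3_eG]; decide)
    omega
  · show len (eG [0, 1, 0, 2]) = 4
    have h1 : len (eG [0, 1, 0, 2]) ≤ 4 := len_le [0, 1, 0, 2]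
    have h2 : 3 < len (eG [0, 1, 0, 2]) := len_lb (by rw [φ3_eG]; decide)
    omega
  · show len (eG [0, 1, 2, 0]) = 4
    have h1 : len (eG [0, 1, 2, 0]) ≤ 4 := len_le [0, 1, 2, 0]
    have h2 : 3 < len (eG [0, 1, 2, 0]) := len_lb (by rw [φ3_eG]; decide)
    omega
  · show len (eG [0, 1, 2, 1]) = 4
    have h1 : len (eG [0, 1, 2, 1]) ≤ 4 := len_le [0, 1, 2, 1]
    have h2 : 3 < len (eG [0, 1, 2, 1]) := len_lb (by rw [φ3_eG]; decide)
    omega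
  · show len (eG [0, 2, 0, 1]) = 4
    have h1 : len (eG [0, 2, 0, 1]) ≤ 4 := len_le [0, 2, 0, 1]
    have h2 : 3 < len (eG [0, 2, 0, 1]) := len_lb (by rw [φ3_eG]; decide)
    omega
  · show len (eG [0, 2, 1, 0]) = 4
    have h1 : len (eG [0, 2, 1, 0]) ≤ 4 := len_le [0, 2, 1, 0]
    have h2 : 3 < len (eG [0, 2, 1, 0]) := len_lb (by rw [φ3_eG]; decide)
    omega

lemma normal (L : List (Fin 3)) : ∃ M ∈ NF24L, eG L = eG M := by
  induction L using List.reverseRecOn with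
  | nil => exact ⟨[], by decide, rfl⟩
  | append_singleton L i ih =>
      obtain ⟨M, hM, hLM⟩ := ih
      obtain ⟨M', hM', hMM'⟩ := step24 M hM i
      refine ⟨M', hM', ?_⟩
      rw [eG_concat, hLM, ← hMM', eG_concat]

lemma mulS1 : ∀ x ∈ ({1, t 0, t 1, t 0 * t 1, t 1 * t 0, t 0 * t 1 * t 0} : Set ClusterGroupA3),
    ∀ y ∈ ({1, t 0, t 1, t 0 * t 1, t 1 * t 0, t 0 * t 1 * t 0} : Set ClusterGroupA3),
    x * y ∈ ({1, t 0, t 1, t 0 * t 1, t 1 * t 0, t 0 * t 1 * t 0} : Set ClusterGroupA3) := by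
  intro x hx y hy
  simp only [Set.mem_insert_iff, Set.mem_singleton_iff] at hx hy ⊢
  rcases hx with rfl|rfl|rfl|rfl|rfl|rfl <;> rcases hy with rfl|rfl|rfl|rfl|rfl|rfl
  · exact Or.inl (by
      calc ((1 : ClusterGroupA3)) * ((1 : ClusterGroupA3)) = eG ([] ++ []) := by rw [eG_append, E_nil]
        _ = eG [] := rfl
        _ = (1 : ClusterGroupA3) := E_nil)
  · exact Or.inr (Or.inl (by
      calc ((1 : ClusterGroupA3)) * (t 0) = eG ([] ++ [0]) := by rw [eG_append, E_nil, E_0]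
        _ = eG [0] := rfl
        _ = t 0 := E_0))
  · exact Or.inr (Or.inr (Or.inl (by
      calc ((1 : ClusterGroupA3)) * (t 1) = eG ([] ++ [1]) := by rw [eG_append, E_nil, E_1]
        _ = eG [1] := rfl
        _ = t 1 := E_1)))
  · exact Or.inr (Or.inr (Or.inr (Or.inl (by
      calc ((1 : ClusterGroupA3)) * (t 0 * t 1) = eG ([] ++ [0, 1]) := by rw [eG_append, E_nil, E_01]
        _ = eG [0, 1] := rfl
        _ = t 0 * t 1 := E_01))))
  · exact Or.inr (Or.inr (Or.inr (Or.inr (Or.inl (by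
      calc ((1 : ClusterGroupA3)) * (t 1 * t 0) = eG ([] ++ [1, 0]) := by rw [eG_append, E_nil, E_10]
        _ = eG [1, 0] := rfl
        _ = t 1 * t 0 := E_10)))))
  · exact Or.inr (Or.inr (Or.inr (Or.inr (Or.inr (by
      calc ((1 : ClusterGroupA3)) * (t 0 * t 1 * t 0) = eG ([] ++ [0, 1, 0]) := by rw [eG_append, E_nil, E_010]
        _ = eG [0, 1, 0] := rfl
        _ = t 0 * t 1 * t 0 := E_010)))))
  · exact Or.inr (Or.inl (by
      calc (t 0) * ((1 : ClusterGroupA3)) = eG ([0] ++ []) := by rw [eG_append, E_0, E_nil]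
        _ = eG [0] := rfl
        _ = t 0 := E_0))
  · exact Or.inl (by
      calc (t 0) * (t 0) = eG ([0] ++ [0]) := by rw [eG_append, E_0]
        _ = eG [] := stepE Q0 [] []
        _ = (1 : ClusterGroupA3) := E_nil)
  · exact Or.inr (Or.inr (Or.inr (Or.inl (by
      calc (t 0) * (t 1) = eG ([0] ++ [1]) := by rw [eG_append, E_0, E_1]
        _ = eG [0, 1] := rfl
        _ = t 0 * t 1 := E_01))))
  · exact Or.inr (Or.inr (Or.inl (by
      calc (t 0) * (t 0 * t 1) = eG ([0] ++ [0, 1]) := by rw [eG_append, E_0, E_01]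
        _ = eG [1] := stepE Q0 [] [1]
        _ = t 1 := E_1)))
  · exact Or.inr (Or.inr (Or.inr (Or.inr (Or.inr (by
      calc (t 0) * (t 1 * t 0) = eG ([0] ++ [1, 0]) := by rw [eG_append, E_0, E_10]
        _ = eG [0, 1, 0] := rfl
        _ = t 0 * t 1 * t 0 := E_010)))))
  · exact Or.inr (Or.inr (Or.inr (Or.inr (Or.inl (by
      calc (t 0) * (t 0 * t 1 * t 0) = eG ([0] ++ [0, 1, 0]) := by rw [eG_append, E_0, E_010]
        _ = eG [1, 0] := stepE Q0 [] [1, 0]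
        _ = t 1 * t 0 := E_10)))))
  · exact Or.inr (Or.inr (Or.inl (by
      calc (t 1) * ((1 : ClusterGroupA3)) = eG ([1] ++ []) := by rw [eG_append, E_1, E_nil]
        _ = eG [1] := rfl
        _ = t 1 := E_1)))
  · exact Or.inr (Or.inr (Or.inr (Or.inr (Or.inl (by
      calc (t 1) * (t 0) = eG ([1] ++ [0]) := by rw [eG_append, E_1, E_0]
        _ = eG [1, 0] := rfl
        _ = t 1 * t 0 := E_10)))))
  · exact Or.inl (by
      calc (t 1) * (t 1) = eG ([1] ++ [1]) := by rw [eG_append, E_1]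
        _ = eG [] := stepE Q1 [] []
        _ = (1 : ClusterGroupA3) := E_nil)
  · exact Or.inr (Or.inr (Or.inr (Or.inr (Or.inr (by
      calc (t 1) * (t 0 * t 1) = eG ([1] ++ [0, 1]) := by rw [eG_append, E_1, E_01]
        _ = eG [0, 1, 0] := stepE B01.symm [] []
        _ = t 0 * t 1 * t 0 := E_010)))))
  · exact Or.inr (Or.inl (by
      calc (t 1) * (t 1 * t 0) = eG ([1] ++ [1, 0]) := by rw [eG_append, E_1, E_10]
        _ = eG [0] := stepE Q1 [] [0]
        _ = t 0 := E_0))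
  · exact Or.inr (Or.inr (Or.inr (Or.inl (by
      calc (t 1) * (t 0 * t 1 * t 0) = eG ([1] ++ [0, 1, 0]) := by rw [eG_append, E_1, E_010]
        _ = eG [0, 1] := (stepE B01 [1] []).trans (stepE Q1 [] [0, 1])
        _ = t 0 * t 1 := E_01))))
  · exact Or.inr (Or.inr (Or.inr (Or.inl (by
      calc (t 0 * t 1) * ((1 : ClusterGroupA3)) = eG ([0, 1] ++ []) := by rw [eG_append, E_01, E_nil]
        _ = eG [0, 1] := rfl
        _ = t 0 * t 1 := E_01))))
  · exact Or.inr (Or.inr (Or.inr (Or.inr (Or.inr (by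
      calc (t 0 * t 1) * (t 0) = eG ([0, 1] ++ [0]) := by rw [eG_append, E_01, E_0]
        _ = eG [0, 1, 0] := rfl
        _ = t 0 * t 1 * t 0 := E_010)))))
  · exact Or.inr (Or.inl (by
      calc (t 0 * t 1) * (t 1) = eG ([0, 1] ++ [1]) := by rw [eG_append, E_01, E_1]
        _ = eG [0] := stepE Q1 [0] []
        _ = t 0 := E_0))
  · exact Or.inr (Or.inr (Or.inr (Or.inr (Or.inl (by
      calc (t 0 * t 1) * (t 0 * t 1) = eG ([0, 1] ++ [0, 1]) := by rw [eG_append, E_01]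
        _ = eG [1, 0] := (stepE B01 [] [1]).trans (stepE Q1 [1, 0] [])
        _ = t 1 * t 0 := E_10)))))
  · exact Or.inl (by
      calc (t 0 * t 1) * (t 1 * t 0) = eG ([0, 1] ++ [1, 0]) := by rw [eG_append, E_01, E_10]
        _ = eG [] := (stepE Q1 [0] [0]).trans (stepE Q0 [] [])
        _ = (1 : ClusterGroupA3) := E_nil)
  · exact Or.inr (Or.inr (Or.inl (by
      calc (t 0 * t 1) * (t 0 * t 1 * t 0) = eG ([0, 1] ++ [0, 1, 0]) := by rw [eG_append, E_01, E_010]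
        _ = eG [1] := (stepE B01 [] [1, 0]).trans ((stepE Q1 [1, 0] [0]).trans (stepE Q0 [1] []))
        _ = t 1 := E_1)))
  · exact Or.inr (Or.inr (Or.inr (Or.inr (Or.inl (by
      calc (t 1 * t 0) * ((1 : ClusterGroupA3)) = eG ([1, 0] ++ []) := by rw [eG_append, E_10, E_nil]
        _ = eG [1, 0] := rfl
        _ = t 1 * t 0 := E_10)))))
  · exact Or.inr (Or.inr (Or.inl (by
      calc (t 1 * t 0) * (t 0) = eG ([1, 0] ++ [0]) := by rw [eG_append, E_10, E_0]
        _ = eG [1] := stepE Q0 [1] []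
        _ = t 1 := E_1)))
  · exact Or.inr (Or.inr (Or.inr (Or.inr (Or.inr (by
      calc (t 1 * t 0) * (t 1) = eG ([1, 0] ++ [1]) := by rw [eG_append, E_10, E_1]
        _ = eG [0, 1, 0] := stepE B01.symm [] []
        _ = t 0 * t 1 * t 0 := E_010)))))
  · exact Or.inl (by
      calc (t 1 * t 0) * (t 0 * t 1) = eG ([1, 0] ++ [0, 1]) := by rw [eG_append, E_10, E_01]
        _ = eG [] := (stepE Q0 [1] [1]).trans (stepE Q1 [] [])
        _ = (1 : ClusterGroupA3) := E_nil)
  · exact Or.inr (Or.inr (Or.inr (Or.inl (by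
      calc (t 1 * t 0) * (t 1 * t 0) = eG ([1, 0] ++ [1, 0]) := by rw [eG_append, E_10]
        _ = eG [0, 1] := (stepE B01 [1] []).trans (stepE Q1 [] [0, 1])
        _ = t 0 * t 1 := E_01))))
  · exact Or.inr (Or.inl (by
      calc (t 1 * t 0) * (t 0 * t 1 * t 0) = eG ([1, 0] ++ [0, 1, 0]) := by rw [eG_append, E_10, E_010]
        _ = eG [0] := (stepE Q0 [1] [1, 0]).trans (stepE Q1 [] [0])
        _ = t 0 := E_0))
  · exact Or.inr (Or.inr (Or.inr (Or.inr (Or.inr (by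
      calc (t 0 * t 1 * t 0) * ((1 : ClusterGroupA3)) = eG ([0, 1, 0] ++ []) := by rw [eG_append, E_010, E_nil]
        _ = eG [0, 1, 0] := rfl
        _ = t 0 * t 1 * t 0 := E_010)))))
  · exact Or.inr (Or.inr (Or.inr (Or.inl (by
      calc (t 0 * t 1 * t 0) * (t 0) = eG ([0, 1, 0] ++ [0]) := by rw [eG_append, E_010, E_0]
        _ = eG [0, 1] := stepE Q0 [0, 1] []
        _ = t 0 * t 1 := E_01))))
  · exact Or.inr (Or.inr (Or.inr (Or.inr (Or.inl (by
      calc (t 0 * t 1 * t 0) * (t 1) = eG ([0, 1, 0] ++ [1]) := by rw [eG_append, E_010, E_1]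
        _ = eG [1, 0] := (stepE B01 [] [1]).trans (stepE Q1 [1, 0] [])
        _ = t 1 * t 0 := E_10)))))
  · exact Or.inr (Or.inl (by
      calc (t 0 * t 1 * t 0) * (t 0 * t 1) = eG ([0, 1, 0] ++ [0, 1]) := by rw [eG_append, E_010, E_01]
        _ = eG [0] := (stepE Q0 [0, 1] [1]).trans (stepE Q1 [0] [])
        _ = t 0 := E_0))
  · exact Or.inr (Or.inr (Or.inl (by
      calc (t 0 * t 1 * t 0) * (t 1 * t 0) = eG ([0, 1, 0] ++ [1, 0]) := by rw [eG_append, E_010, E_10]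
        _ = eG [1] := (stepE B01 [] [1, 0]).trans ((stepE Q1 [1, 0] [0]).trans (stepE Q0 [1] []))
        _ = t 1 := E_1)))
  · exact Or.inl (by
      calc (t 0 * t 1 * t 0) * (t 0 * t 1 * t 0) = eG ([0, 1, 0] ++ [0, 1, 0]) := by rw [eG_append, E_010]
        _ = eG [] := (stepE Q0 [0, 1] [1, 0]).trans ((stepE Q1 [0] [0]).trans (stepE Q0 [] []))
        _ = (1 : ClusterGroupA3) := E_nil)

lemma invS1 : ∀ x ∈ ({1, t 0, t 1, t 0 * t 1, t 1 * t 0, t 0 * t 1 * t 0} : Set ClusterGroupA3),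
    x⁻¹ ∈ ({1, t 0, t 1, t 0 * t 1, t 1 * t 0, t 0 * t 1 * t 0} : Set ClusterGroupA3) := by
  intro x hx
  simp only [Set.mem_insert_iff, Set.mem_singleton_iff] at hx ⊢
  rcases hx with rfl|rfl|rfl|rfl|rfl|rfl
  · exact Or.inl (by
      calc ((1 : ClusterGroupA3))⁻¹ = (eG [])⁻¹ := by rw [E_nil]
        _ = eG [] := eG_reverse []
        _ = (1 : ClusterGroupA3) := E_nil)
  · exact Or.inr (Or.inl (by
      calc (t 0)⁻¹ = (eG [0])⁻¹ := by rw [E_0]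
        _ = eG [0] := eG_reverse [0]
        _ = t 0 := E_0))
  · exact Or.inr (Or.inr (Or.inl (by
      calc (t 1)⁻¹ = (eG [1])⁻¹ := by rw [E_1]
        _ = eG [1] := eG_reverse [1]
        _ = t 1 := E_1)))
  · exact Or.inr (Or.inr (Or.inr (Or.inr (Or.inl (by
      calc (t 0 * t 1)⁻¹ = (eG [0, 1])⁻¹ := by rw [E_01]
        _ = eG [1, 0] := eG_reverse [0, 1]
        _ = t 1 * t 0 := E_10)))))
  · exact Or.inr (Or.inr (Or.inr (Or.inl (by
      calc (t 1 * t 0)⁻¹ = (eG [1, 0])⁻¹ := by rw [E_10]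
        _ = eG [0, 1] := eG_reverse [1, 0]
        _ = t 0 * t 1 := E_01))))
  · exact Or.inr (Or.inr (Or.inr (Or.inr (Or.inr (by
      calc (t 0 * t 1 * t 0)⁻¹ = (eG [0, 1, 0])⁻¹ := by rw [E_010]
        _ = eG [0, 1, 0] := eG_reverse [0, 1, 0]
        _ = t 0 * t 1 * t 0 := E_010)))))

/-- For `I = {t₁, t₂}`, the parabolic subgroup `G_I` is
`{e, t₁, t₂, t₁t₂, t₂t₁, t₁t₂t₁}` and
`G^I = {e, t₃, t₁t₃, t₂t₃, t₁t₂t₃, t₂t₁t₃}`. -/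
theorem stmt_13 :
    (Subgroup.closure {t 0, t 1} : Set ClusterGroupA3) =
      {1, t 0, t 1, t 0 * t 1, t 1 * t 0, t 0 * t 1 * t 0} ∧
    {w : ClusterGroupA3 | ∀ x ∈ ({0, 1} : Set (Fin 3)), len w < len (w * t x)} =
      {1, t 2, t 0 * t 2, t 1 * t 2, t 0 * t 1 * t 2, t 1 * t 0 * t 2} := by
  constructor
  · ext w
    simp only [SetLike.mem_coe]
    constructor
    · intro hw
      induction hw using Subgroup.closure_induction with
      | mem x hx =>
          simp only [Set.mem_insert_iff, Set.mem_singleton_iff] at hx ⊢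
          rcases hx with rfl|rfl
          · exact Or.inr (Or.inl rfl)
          · exact Or.inr (Or.inr (Or.inl rfl))
      | one => exact Or.inl rfl
      | mul x y _ _ hx hy => exact mulS1 x hx y hy
      | inv x _ hx => exact invS1 x hx
    · intro hw
      simp only [Set.mem_insert_iff, Set.mem_singleton_iff] at hw
      have m0 : t 0 ∈ Subgroup.closure ({t 0, t 1} : Set ClusterGroupA3) :=
        Subgroup.subset_closure (by simp)
      have m1 : t 1 ∈ Subgroup.closure ({t 0, t 1} : Set ClusterGroupA3) :=
        Subgroup.subset_closure (by simp)
      rcases hw with rfl|rfl|rfl|rfl|rfl|rfl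
      · exact Subgroup.one_mem _
      · exact m0
      · exact m1
      · exact Subgroup.mul_mem _ m0 m1
      · exact Subgroup.mul_mem _ m1 m0
      · exact Subgroup.mul_mem _ (Subgroup.mul_mem _ m0 m1) m0
  · ext w
    constructor
    · intro hw
      simp only [Set.mem_setOf_eq] at hw
      obtain ⟨L, hL⟩ := exists_word w
      obtain ⟨M, hM, hLM⟩ := normal L
      have hwM : w = eG M := hL.symm.trans hLM
      subst hwM
      simp only [Set.mem_insert_iff, Set.mem_singleton_iff]
      fin_cases hM
      · exact Or.inl (E_nil)
      · exfalso
        have h := hw 0 (Set.mem_insert _ _)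
        rw [show eG [0] * t 0 = eG [] from by rw [← eG_concat]; exact stepE Q0 [] []] at h
        have h1 : len (eG []) ≤ 0 := len_le []
        have h2 : 0 < len (eG [0]) := len_lb (by rw [φ3_eG]; decide)
        omega
      · exfalso
        have h := hw 1 (Set.mem_insert_iff.mpr (Or.inr rfl))
        rw [show eG [1] * t 1 = eG [] from by rw [← eG_concat]; exact stepE Q1 [] []] at h
        have h1 : len (eG []) ≤ 0 := len_le []
        have h2 : 0 < len (eG [1]) := len_lb (by rw [φ3_eG]; decide)
        omega
      · exact Or.inr (Or.inl (E_2))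
      · exfalso
        have h := hw 1 (Set.mem_insert_iff.mpr (Or.inr rfl))
        rw [show eG [0, 1] * t 1 = eG [0] from by rw [← eG_concat]; exact stepE Q1 [0] []] at h
        have h1 : len (eG [0]) ≤ 1 := len_le [0]
        have h2 : 1 < len (eG [0, 1]) := len_lb (by rw [φ3_eG]; decide)
        omega
      · exact Or.inr (Or.inr (Or.inl (E_02)))
      · exfalso
        have h := hw 0 (Set.mem_insert _ _)
        rw [show eG [1, 0] * t 0 = eG [1] from by rw [← eG_concat]; exact stepE Q0 [1] []] at h
        have h1 : len (eG [1]) ≤ 1 := len_le [1]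
        have h2 : 1 < len (eG [1, 0]) := len_lb (by rw [φ3_eG]; decide)
        omega
      · exact Or.inr (Or.inr (Or.inr (Or.inl (E_12))))
      · exfalso
        have h := hw 0 (Set.mem_insert _ _)
        rw [show eG [2, 0] * t 0 = eG [2] from by rw [← eG_concat]; exact stepE Q0 [2] []] at h
        have h1 : len (eG [2]) ≤ 1 := len_le [2]
        have h2 : 1 < len (eG [2, 0]) := len_lb (by rw [φ3_eG]; decide)
        omega
      · exfalso
        have h := hw 1 (Set.mem_insert_iff.mpr (Or.inr rfl))
        rw [show eG [2, 1] * t 1 = eG [2] from by rw [← eG_concat]; exact stepE Q1 [2] []] at h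
        have h1 : len (eG [2]) ≤ 1 := len_le [2]
        have h2 : 1 < len (eG [2, 1]) := len_lb (by rw [φ3_eG]; decide)
        omega
      · exfalso
        have h := hw 0 (Set.mem_insert _ _)
        rw [show eG [0, 1, 0] * t 0 = eG [0, 1] from by rw [← eG_concat]; exact stepE Q0 [0, 1] []] at h
        have h1 : len (eG [0, 1]) ≤ 2 := len_le [0, 1]
        have h2 : 2 < len (eG [0, 1, 0]) := len_lb (by rw [φ3_eG]; decide)
        omega
      · exact Or.inr (Or.inr (Or.inr (Or.inr (Or.inl (E_012)))))
      · exfalso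
        have h := hw 0 (Set.mem_insert _ _)
        rw [show eG [0, 2, 0] * t 0 = eG [0, 2] from by rw [← eG_concat]; exact stepE Q0 [0, 2] []] at h
        have h1 : len (eG [0, 2]) ≤ 2 := len_le [0, 2]
        have h2 : 2 < len (eG [0, 2, 0]) := len_lb (by rw [φ3_eG]; decide)
        omega
      · exfalso
        have h := hw 1 (Set.mem_insert_iff.mpr (Or.inr rfl))
        rw [show eG [0, 2, 1] * t 1 = eG [0, 2] from by rw [← eG_concat]; exact stepE Q1 [0, 2] []] at h
        have h1 : len (eG [0, 2]) ≤ 2 := len_le [0, 2]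
        have h2 : 2 < len (eG [0, 2, 1]) := len_lb (by rw [φ3_eG]; decide)
        omega
      · exact Or.inr (Or.inr (Or.inr (Or.inr (Or.inr (E_102)))))
      · exfalso
        have h := hw 0 (Set.mem_insert _ _)
        rw [show eG [1, 2, 0] * t 0 = eG [1, 2] from by rw [← eG_concat]; exact stepE Q0 [1, 2] []] at h
        have h1 : len (eG [1, 2]) ≤ 2 := len_le [1, 2]
        have h2 : 2 < len (eG [1, 2, 0]) := len_lb (by rw [φ3_eG]; decide)
        omega
      · exfalso
        have h := hw 1 (Set.mem_insert_iff.mpr (Or.inr rfl))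
        rw [show eG [1, 2, 1] * t 1 = eG [1, 2] from by rw [← eG_concat]; exact stepE Q1 [1, 2] []] at h
        have h1 : len (eG [1, 2]) ≤ 2 := len_le [1, 2]
        have h2 : 2 < len (eG [1, 2, 1]) := len_lb (by rw [φ3_eG]; decide)
        omega
      · exfalso
        have h := hw 1 (Set.mem_insert_iff.mpr (Or.inr rfl))
        rw [show eG [2, 0, 1] * t 1 = eG [2, 0] from by rw [← eG_concat]; exact stepE Q1 [2, 0] []] at h
        have h1 : len (eG [2, 0]) ≤ 2 := len_le [2, 0]
        have h2 : 2 < len (eG [2, 0, 1]) := len_lb (by rw [φ3_eG]; decide)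
        omega
      · exfalso
        have h := hw 0 (Set.mem_insert _ _)
        rw [show eG [2, 1, 0] * t 0 = eG [2, 1] from by rw [← eG_concat]; exact stepE Q0 [2, 1] []] at h
        have h1 : len (eG [2, 1]) ≤ 2 := len_le [2, 1]
        have h2 : 2 < len (eG [2, 1, 0]) := len_lb (by rw [φ3_eG]; decide)
        omega
      · exfalso
        have h := hw 0 (Set.mem_insert _ _)
        rw [show eG [0, 1, 0, 2] * t 0 = eG [2, 0, 1] from by rw [← eG_concat]; exact (stepE B01 [] [2, 0]).trans ((stepE C1 [1] []).trans (stepE Q1 [] [2, 0, 1]))] at h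
        have h1 : len (eG [2, 0, 1]) ≤ 3 := len_le [2, 0, 1]
        have h2 : 3 < len (eG [0, 1, 0, 2]) := len_lb (by rw [φ3_eG]; decide)
        omega
      · exfalso
        have h := hw 0 (Set.mem_insert _ _)
        rw [show eG [0, 1, 2, 0] * t 0 = eG [0, 1, 2] from by rw [← eG_concat]; exact stepE Q0 [0, 1, 2] []] at h
        have h1 : len (eG [0, 1, 2]) ≤ 3 := len_le [0, 1, 2]
        have h2 : 3 < len (eG [0, 1, 2, 0]) := len_lb (by rw [φ3_eG]; decide)
        omega
      · exfalso
        have h := hw 0 (Set.mem_insert _ _)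
        rw [show eG [0, 1, 2, 1] * t 0 = eG [1, 2, 1] from by rw [← eG_concat]; exact (stepE Q0.symm [0, 1, 2] [1, 0]).trans ((stepE B01 [0, 1, 2, 0] []).trans ((stepE C1 [] [1, 0, 1]).trans ((stepE Q1 [1, 2, 0] [0, 1]).trans (stepE Q0 [1, 2] [1]))))] at h
        have h1 : len (eG [1, 2, 1]) ≤ 3 := len_le [1, 2, 1]
        have h2 : 3 < len (eG [0, 1, 2, 1]) := len_lb (by rw [φ3_eG]; decide)
        omega
      · exfalso
        have h := hw 0 (Set.mem_insert _ _)
        rw [show eG [0, 2, 0, 1] * t 0 = eG [1, 0, 2] from by rw [← eG_concat]; exact (stepE Q1.symm [0] [2, 0, 1, 0]).trans ((stepE C1.symm [0, 1] [0]).trans ((stepE Q0 [0, 1, 0, 1, 2] []).trans ((stepE B01 [] [1, 2]).trans (stepE Q1 [1, 0] [2]))))] at h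
        have h1 : len (eG [1, 0, 2]) ≤ 3 := len_le [1, 0, 2]
        have h2 : 3 < len (eG [0, 2, 0, 1]) := len_lb (by rw [φ3_eG]; decide)
        omega
      · exfalso
        have h := hw 0 (Set.mem_insert _ _)
        rw [show eG [0, 2, 1, 0] * t 0 = eG [0, 2, 1] from by rw [← eG_concat]; exact stepE Q0 [0, 2, 1] []] at h
        have h1 : len (eG [0, 2, 1]) ≤ 3 := len_le [0, 2, 1]
        have h2 : 3 < len (eG [0, 2, 1, 0]) := len_lb (by rw [φ3_eG]; decide)
        omega
    · intro hw
      simp only [Set.mem_insert_iff, Set.mem_singleton_iff] at hw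
      simp only [Set.mem_setOf_eq]
      rcases hw with rfl|rfl|rfl|rfl|rfl|rfl
      · intro x hx
        simp only [Set.mem_insert_iff, Set.mem_singleton_iff] at hx
        rcases hx with rfl|rfl
        · rw [show (1 : ClusterGroupA3) = eG [] from E_nil.symm]
          rw [show eG [] * t 0 = eG [0] from by rw [← eG_concat]; exact rfl]
          have h1 : len (eG []) ≤ 0 := len_le []
          have h2 : 0 < len (eG [0]) := len_lb (by rw [φ3_eG]; decide)
          omega
        · rw [show (1 : ClusterGroupA3) = eG [] from E_nil.symm]
          rw [show eG [] * t 1 = eG [1] from by rw [← eG_concat]; exact rfl]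
          have h1 : len (eG []) ≤ 0 := len_le []
          have h2 : 0 < len (eG [1]) := len_lb (by rw [φ3_eG]; decide)
          omega
      · intro x hx
        simp only [Set.mem_insert_iff, Set.mem_singleton_iff] at hx
        rcases hx with rfl|rfl
        · rw [show t 2 = eG [2] from E_2.symm]
          rw [show eG [2] * t 0 = eG [2, 0] from by rw [← eG_concat]; exact rfl]
          have h1 : len (eG [2]) ≤ 1 := len_le [2]
          have h2 : 1 < len (eG [2, 0]) := len_lb (by rw [φ3_eG]; decide)
          omega
        · rw [show t 2 = eG [2] from E_2.symm]
          rw [show eG [2] * t 1 = eG [2, 1] from by rw [← eG_concat]; exact rfl]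
          have h1 : len (eG [2]) ≤ 1 := len_le [2]
          have h2 : 1 < len (eG [2, 1]) := len_lb (by rw [φ3_eG]; decide)
          omega
      · intro x hx
        simp only [Set.mem_insert_iff, Set.mem_singleton_iff] at hx
        rcases hx with rfl|rfl
        · rw [show t 0 * t 2 = eG [0, 2] from E_02.symm]
          rw [show eG [0, 2] * t 0 = eG [0, 2, 0] from by rw [← eG_concat]; exact rfl]
          have h1 : len (eG [0, 2]) ≤ 2 := len_le [0, 2]
          have h2 : 2 < len (eG [0, 2, 0]) := len_lb (by rw [φ3_eG]; decide)
          omega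
        · rw [show t 0 * t 2 = eG [0, 2] from E_02.symm]
          rw [show eG [0, 2] * t 1 = eG [0, 2, 1] from by rw [← eG_concat]; exact rfl]
          have h1 : len (eG [0, 2]) ≤ 2 := len_le [0, 2]
          have h2 : 2 < len (eG [0, 2, 1]) := len_lb (by rw [φ3_eG]; decide)
          omega
      · intro x hx
        simp only [Set.mem_insert_iff, Set.mem_singleton_iff] at hx
        rcases hx with rfl|rfl
        · rw [show t 1 * t 2 = eG [1, 2] from E_12.symm]
          rw [show eG [1, 2] * t 0 = eG [1, 2, 0] from by rw [← eG_concat]; exact rfl]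
          have h1 : len (eG [1, 2]) ≤ 2 := len_le [1, 2]
          have h2 : 2 < len (eG [1, 2, 0]) := len_lb (by rw [φ3_eG]; decide)
          omega
        · rw [show t 1 * t 2 = eG [1, 2] from E_12.symm]
          rw [show eG [1, 2] * t 1 = eG [1, 2, 1] from by rw [← eG_concat]; exact rfl]
          have h1 : len (eG [1, 2]) ≤ 2 := len_le [1, 2]
          have h2 : 2 < len (eG [1, 2, 1]) := len_lb (by rw [φ3_eG]; decide)
          omega
      · intro x hx
        simp only [Set.mem_insert_iff, Set.mem_singleton_iff] at hx
        rcases hx with rfl|rfl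
        · rw [show t 0 * t 1 * t 2 = eG [0, 1, 2] from E_012.symm]
          rw [show eG [0, 1, 2] * t 0 = eG [0, 1, 2, 0] from by rw [← eG_concat]; exact rfl]
          have h1 : len (eG [0, 1, 2]) ≤ 3 := len_le [0, 1, 2]
          have h2 : 3 < len (eG [0, 1, 2, 0]) := len_lb (by rw [φ3_eG]; decide)
          omega
        · rw [show t 0 * t 1 * t 2 = eG [0, 1, 2] from E_012.symm]
          rw [show eG [0, 1, 2] * t 1 = eG [0, 1, 2, 1] from by rw [← eG_concat]; exact rfl]
          have h1 : len (eG [0, 1, 2]) ≤ 3 := len_le [0, 1, 2]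
          have h2 : 3 < len (eG [0, 1, 2, 1]) := len_lb (by rw [φ3_eG]; decide)
          omega
      · intro x hx
        simp only [Set.mem_insert_iff, Set.mem_singleton_iff] at hx
        rcases hx with rfl|rfl
        · rw [show t 1 * t 0 * t 2 = eG [1, 0, 2] from E_102.symm]
          rw [show eG [1, 0, 2] * t 0 = eG [0, 2, 0, 1] from by rw [← eG_concat]; exact (stepE Q0.symm [] [1, 0, 2, 0]).trans ((stepE B01 [0] [2, 0]).trans ((stepE C1 [0, 1] []).trans (stepE Q1 [0] [2, 0, 1])))]
          have h1 : len (eG [1, 0, 2]) ≤ 3 := len_le [1, 0, 2]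
          have h2 : 3 < len (eG [0, 2, 0, 1]) := len_lb (by rw [φ3_eG]; decide)
          omega
        · rw [show t 1 * t 0 * t 2 = eG [1, 0, 2] from E_102.symm]
          rw [show eG [1, 0, 2] * t 1 = eG [0, 2, 1, 0] from by rw [← eG_concat]; exact (stepE Q0.symm [] [1, 0, 2, 1]).trans ((stepE Q0.symm [0, 0, 1, 0, 2] [1]).trans ((stepE B01 [0] [2, 0, 0, 1]).trans ((stepE C1 [0, 1] [0, 1]).trans ((stepE Q1 [0] [2, 0, 1, 0, 1]).trans ((stepE B01 [0, 2] [1]).trans (stepE Q1 [0, 2, 1, 0] []))))))]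
          have h1 : len (eG [1, 0, 2]) ≤ 3 := len_le [1, 0, 2]
          have h2 : 3 < len (eG [0, 2, 1, 0]) := len_lb (by rw [φ3_eG]; decide)
          omega
end

section
/- Let G be the cluster group with presentation on generators t₁, t₂, t₃ subject to the relations t₁² = t₂² = t₃² = e, the braid relations, and the cycle relations, and let I = {t₁, t₂}. For w = t₁t₂t₃ one has l(w) = 3, the element t₂t₃ lies in the coset wG_I and has length 2 (which is the minimal length among elements of wG_I), yet the only pair (a, b) with a ∈ G^I, b ∈ G_I, w = ab and l(w) = l(a) + l(b) is a = w, b = e. Hence a minimal length element of the coset wG_I need not yield a length-additive factorisation of w. -/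
/-- `w` lies in `G^I` for `I = {t₁, t₂}`. -/
def mem_GI_upper (w : ClusterGroupA3) : Prop :=
  ∀ x ∈ ({0, 1} : Set (Fin 3)), len w < len (w * t x)

/-- The left coset `wG_I` for `I = {t₁, t₂}`. -/
def leftCoset_GI (w : ClusterGroupA3) : Set ClusterGroupA3 :=
  {u | ∃ b ∈ Subgroup.closure ({t 0, t 1} : Set ClusterGroupA3), u = w * b}

namespace ClusterAux

def σ : Fin 3 → Equiv.Perm (Fin 4)
  | 0 => Equiv.swap 0 1
  | 1 => Equiv.swap 0 2
  | 2 => Equiv.swap 0 3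

lemma hrels : ∀ r ∈ clusterRels, FreeGroup.lift σ r = 1 := by
  intro r hr
  simp only [clusterRels, Set.mem_insert_iff, Set.mem_singleton_iff] at hr
  rcases hr with h|h|h|h|h|h|h|h <;> subst h <;>
    (simp only [map_mul, map_pow, map_inv, FreeGroup.lift_apply_of]; decide)

def φ : ClusterGroupA3 →* Equiv.Perm (Fin 4) := PresentedGroup.toGroup hrels

lemma φt (i : Fin 3) : φ (t i) = σ i := PresentedGroup.toGroup.of hrels

lemma rel_one {r : FreeGroup (Fin 3)} (h : r ∈ clusterRels) :
    PresentedGroup.mk clusterRels r = 1 :=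
  (QuotientGroup.eq_one_iff r).mpr (Subgroup.subset_normalClosure h)

lemma t_sq (i : Fin 3) : t i * t i = 1 := by
  have h : PresentedGroup.mk clusterRels (FreeGroup.of i ^ 2) = 1 := by
    apply rel_one; fin_cases i <;> simp [clusterRels]
  rw [map_pow, sq] at h; exact h

lemma t_inv (i : Fin 3) : (t i)⁻¹ = t i :=
  inv_eq_of_mul_eq_one_right (t_sq i)

lemma cyc1 : t 0 * t 1 * t 2 * t 0 = t 1 * t 2 * t 0 * t 1 := by
  have h : PresentedGroup.mk clusterRels
      ((FreeGroup.of 0 * FreeGroup.of 1 * FreeGroup.of 2 * FreeGroup.of 0) *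
      (FreeGroup.of 1 * FreeGroup.of 2 * FreeGroup.of 0 * FreeGroup.of 1)⁻¹) = 1 := by
    apply rel_one; simp [clusterRels]
  simp only [map_mul, map_inv, mul_inv_eq_one] at h; exact h

lemma phi_word (L : List (Fin 3)) : φ ((L.map t).prod) = (L.map σ).prod := by
  induction L with
  | nil => simp
  | cons i L ih => simp [ih, φt]

lemma inv_word (L : List (Fin 3)) :
    ((L.map t).prod)⁻¹ = (L.reverse.map t).prod := by
  induction L with
  | nil => simp
  | cons i L ih => simp [mul_inv_rev, ih, t_inv]

lemma exists_word (g : ClusterGroupA3) : ∃ L : List (Fin 3), (L.map t).prod = g := by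
  have hg : g ∈ Subgroup.closure (Set.range (PresentedGroup.of :
      Fin 3 → ClusterGroupA3)) := by
    rw [PresentedGroup.closure_range_of]; trivial
  induction hg using Subgroup.closure_induction with
  | mem x hx => obtain ⟨i, rfl⟩ := hx; exact ⟨[i], by simp [t]⟩
  | one => exact ⟨[], by simp⟩
  | mul x y _ _ hx hy =>
    obtain ⟨L1, h1⟩ := hx; obtain ⟨L2, h2⟩ := hy
    exact ⟨L1 ++ L2, by simp [h1, h2]⟩
  | inv x _ hx =>
    obtain ⟨L, h⟩ := hx
    exact ⟨L.reverse, by rw [← inv_word, h]⟩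

lemma len_mem (w : ClusterGroupA3) :
    ∃ L : List (Fin 3), L.length = len w ∧ (L.map t).prod = w := by
  have hne : {r : ℕ | ∃ L : List (Fin 3), L.length = r ∧ (L.map t).prod = w}.Nonempty := by
    obtain ⟨L, hL⟩ := exists_word w
    exact ⟨L.length, L, rfl, hL⟩
  exact Nat.sInf_mem hne

lemma len_le {w : ClusterGroupA3} (L : List (Fin 3)) (h : (L.map t).prod = w) :
    len w ≤ L.length :=
  Nat.sInf_le ⟨L, rfl, h⟩

lemma len_lower {w : ClusterGroupA3} {n : ℕ}
    (h : ∀ L : List (Fin 3), (L.map t).prod = w → n ≤ L.length) : n ≤ len w := by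
  obtain ⟨L, hL, hLp⟩ := len_mem w
  rw [← hL]; exact h L hLp

lemma fix3 {b : ClusterGroupA3}
    (hb : b ∈ Subgroup.closure ({t 0, t 1} : Set ClusterGroupA3)) : φ b 3 = 3 := by
  induction hb using Subgroup.closure_induction with
  | mem x hx =>
    rcases hx with h | h <;> subst h <;> rw [φt] <;> decide
  | one => simp
  | mul x y _ _ hx hy => rw [map_mul, Equiv.Perm.mul_apply, hy, hx]
  | inv x _ hx =>
    rw [map_inv]
    exact (Equiv.Perm.inv_eq_iff_eq).mpr hx.symm

lemma dec1 : ∀ i : Fin 3, σ i ≠ σ 0 * σ 1 * σ 2 := by decide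
lemma dec2 : ∀ i j : Fin 3, σ i * σ j ≠ σ 0 * σ 1 * σ 2 := by decide
lemma dec3 : (1 : Equiv.Perm (Fin 4)) ≠ σ 0 * σ 1 * σ 2 := by decide
lemma dec4 : ∀ i : Fin 3, σ i ≠ σ 1 * σ 2 := by decide
lemma dec5 : (1 : Equiv.Perm (Fin 4)) ≠ σ 1 * σ 2 := by decide
lemma dec6 : ∀ i : Fin 3, (σ i) 3 ≠ 2 := by decide
lemma dec7 : ((1 : Equiv.Perm (Fin 4))) 3 ≠ 2 := by decide
lemma dec8 : (σ 0 * σ 1 * σ 2 : Equiv.Perm (Fin 4)) 3 = 2 := by decide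
lemma dec9 : ∀ i k j : Fin 3, (σ i * σ k) 3 = 2 → σ i * σ k * σ j ≠ σ 0 * σ 1 * σ 2 := by
  decide

end ClusterAux

open ClusterAux

/-- For `I = {t₁, t₂}` and `w = t₁t₂t₃`: `l(w) = 3`, the element `t₂t₃` lies in `wG_I`,
has length `2`, which is minimal among elements of `wG_I`, yet the only length-additive
factorisation `w = ab` with `a ∈ G^I`, `b ∈ G_I` is `a = w`, `b = e`.  Hence a minimal
length element of `wG_I` need not yield a length-additive factorisation of `w`. -/
theorem stmt_16 :
    let w : ClusterGroupA3 := t 0 * t 1 * t 2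
    len w = 3 ∧
    (t 1 * t 2) ∈ leftCoset_GI w ∧ len (t 1 * t 2 : ClusterGroupA3) = 2 ∧
    (∀ u ∈ leftCoset_GI w, 2 ≤ len u) ∧
    ∀ a b : ClusterGroupA3, mem_GI_upper a →
      b ∈ Subgroup.closure ({t 0, t 1} : Set ClusterGroupA3) →
      w = a * b → len w = len a + len b → a = w ∧ b = 1 := by
  intro w
  have hwdef : w = t 0 * t 1 * t 2 := rfl
  have hφw : φ w = σ 0 * σ 1 * σ 2 := by
    rw [hwdef, map_mul, map_mul, φt, φt, φt]
  -- length of w is 3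
  have hlen3 : len w = 3 := by
    apply le_antisymm
    · exact len_le [0, 1, 2] (by simp [hwdef, mul_assoc])
    · apply len_lower
      intro L hL
      have hφ : (L.map σ).prod = σ 0 * σ 1 * σ 2 := by
        rw [← phi_word, hL, hφw]
      by_contra hlt
      push_neg at hlt
      interval_cases h : L.length
      · rw [List.length_eq_zero_iff.mp h] at hφ
        exact dec3 hφ
      · obtain ⟨i, rfl⟩ := List.length_eq_one_iff.mp h
        simp only [List.map_cons, List.map_nil, List.prod_cons, List.prod_nil, mul_one] at hφ
        exact dec1 i hφ
      · match L, h with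
        | [i, j], _ =>
          simp only [List.map_cons, List.map_nil, List.prod_cons, List.prod_nil,
            mul_one] at hφ
          exact dec2 i j hφ
  refine ⟨hlen3, ?_, ?_, ?_, ?_⟩
  -- coset membership
  · refine ⟨t 0 * t 1 * t 0, ?_, ?_⟩
    · exact mul_mem (mul_mem (Subgroup.subset_closure (Or.inl rfl))
        (Subgroup.subset_closure (Or.inr rfl))) (Subgroup.subset_closure (Or.inl rfl))
    · have key : w * (t 0 * t 1 * t 0) = t 1 * t 2 := by
        have h1 : w * (t 0 * t 1 * t 0) = (t 0 * t 1 * t 2 * t 0) * (t 1 * t 0) := by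
          rw [hwdef]; group
        rw [h1, cyc1]
        have h2 : t 1 * t 2 * t 0 * t 1 * (t 1 * t 0)
            = t 1 * t 2 * (t 0 * ((t 1 * t 1) * t 0)) := by group
        rw [h2, t_sq 1, one_mul, t_sq 0, mul_one]
      exact key.symm
  -- len (t1 t2) = 2
  · apply le_antisymm
    · exact len_le [1, 2] (by simp [mul_assoc])
    · apply len_lower
      intro L hL
      have hφ : (L.map σ).prod = σ 1 * σ 2 := by
        rw [← phi_word, hL, map_mul, φt, φt]
      by_contra hlt
      push_neg at hlt
      interval_cases h : L.length
      · rw [List.length_eq_zero_iff.mp h] at hφ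
        exact dec5 hφ
      · obtain ⟨i, rfl⟩ := List.length_eq_one_iff.mp h
        simp only [List.map_cons, List.map_nil, List.prod_cons, List.prod_nil, mul_one] at hφ
        exact dec4 i hφ
  -- minimal length in coset is ≥ 2
  · rintro u ⟨b, hb, rfl⟩
    apply len_lower
    intro L hL
    have hval : (L.map σ).prod 3 = 2 := by
      rw [← phi_word, hL, map_mul, Equiv.Perm.mul_apply, fix3 hb, hφw]
      exact dec8
    by_contra hlt
    push_neg at hlt
    interval_cases h : L.length
    · rw [List.length_eq_zero_iff.mp h] at hval
      exact dec7 hval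
    · obtain ⟨i, rfl⟩ := List.length_eq_one_iff.mp h
      simp only [List.map_cons, List.map_nil, List.prod_cons, List.prod_nil, mul_one] at hval
      exact dec6 i hval
  -- uniqueness of length-additive factorisation
  · intro a b _ hb hw hsum
    rw [hlen3] at hsum
    obtain ⟨La, hLa_len, hLa⟩ := len_mem a
    obtain ⟨Lb, hLb_len, hLb⟩ := len_mem b
    have hφab : σ 0 * σ 1 * σ 2 = φ a * φ b := by
      rw [← hφw, hw, map_mul]
    have hφa3 : φ a 3 = 2 := by
      have h : (σ 0 * σ 1 * σ 2 : Equiv.Perm (Fin 4)) 3 = φ a (φ b 3) := by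
        rw [hφab]; rfl
      rw [fix3 hb, dec8] at h
      exact h.symm
    rcases Lb with _ | ⟨j, Lb'⟩
    · -- b = 1, a = w
      have hb1 : b = 1 := by simpa using hLb.symm
      subst hb1
      rw [mul_one] at hw
      exact ⟨hw.symm, rfl⟩
    · -- len b ≥ 1
      exfalso
      have hlb1 : 1 ≤ len b := by
        rw [← hLb_len]; simp
      have hla2 : La.length ≤ 2 := by omega
      have hφaL : (La.map σ).prod = φ a := by rw [← phi_word, hLa]
      rcases La with _ | ⟨i, La1⟩
      · simp only [List.map_nil, List.prod_nil] at hφaL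
        rw [← hφaL] at hφa3
        exact dec7 hφa3
      rcases La1 with _ | ⟨k, La2⟩
      · simp only [List.map_cons, List.map_nil, List.prod_cons, List.prod_nil,
          mul_one] at hφaL
        rw [← hφaL] at hφa3
        exact dec6 i hφa3
      rcases La2 with _ | ⟨m, La3⟩
      swap
      · simp at hla2
      · -- La = [i, k], so len a = 2, len b = 1, Lb = [j]
        simp only [List.map_cons, List.map_nil, List.prod_cons, List.prod_nil,
          mul_one] at hφaL
        have hlena : len a = 2 := by
          simp only [List.length_cons, List.length_nil] at hLa_len
          omega
        have hlenb : len b = 1 := by omega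
        have hLb'nil : Lb' = [] := by
          have : Lb'.length = 0 := by
            have := hLb_len
            simp only [List.length_cons] at this
            omega
          exact List.length_eq_zero_iff.mp this
        subst hLb'nil
        have hbj : b = t j := by simpa using hLb.symm
        have hφb : φ b = σ j := by rw [hbj, φt]
        rw [← hφaL, hφb] at hφab
        rw [← hφaL] at hφa3
        exact dec9 i k j hφa3 (by rw [← hφab, mul_assoc])
end
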